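/- Let K be a field and q ∈ K an element that is not a root of unity. Let M be the C(q)-module with K-basis {v_n : n ∈ ℕ} ∪ {w_n : n ∈ ℕ} and action a·v_0 = 0, a·v_n = ((qⁿ−1)/(q−1))·v_{n−1} for n ≥ 1, b·v_n = v_{n+1}, a·w_n = qⁿ(w_n + w_{n+1}), b·w_n = (q^{−n}/(1−q))·w_n + (−1)ⁿ v_0, and let V = span_K{v_n : n ∈ ℕ}. Then M is an essential extension of its submodule V, i.e., every nonzero C(q)-submodule of M intersects V nontrivially. -/

import Mathlib

noncomputable section

open FreeAlgebra

/-- Defining relation of the quantized Weyl algebra `C(q)`: `a * b = q • (b * a) + 1`,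
where `ι K 0` plays the role of `a` and `ι K 1` plays the role of `b`. -/
inductive QuantizedWeylRel (K : Type) [Field K] (q : K) :
    FreeAlgebra K (Fin 2) → FreeAlgebra K (Fin 2) → Prop
  | rel : QuantizedWeylRel K q (ι K (0 : Fin 2) * ι K (1 : Fin 2))
      (q • (ι K (1 : Fin 2) * ι K (0 : Fin 2)) + 1)

/-- The quantized Weyl algebra `C(q)`. -/
abbrev QuantizedWeyl (K : Type) [Field K] (q : K) : Type :=
  RingQuot (QuantizedWeylRel K q)

/-- The generator `a` of the quantized Weyl algebra. -/
def QuantizedWeyl.a (K : Type) [Field K] (q : K) : QuantizedWeyl K q :=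
  RingQuot.mkAlgHom K (QuantizedWeylRel K q) (ι K (0 : Fin 2))

/-- The generator `b` of the quantized Weyl algebra. -/
def QuantizedWeyl.b (K : Type) [Field K] (q : K) : QuantizedWeyl K q :=
  RingQuot.mkAlgHom K (QuantizedWeylRel K q) (ι K (1 : Fin 2))

/-- Let `M` be the `C(q)`-module (`q` not a root of unity) with `K`-basis
`{v_n} ∪ {w_n}` and action as in the paper, and let `V = span_K{v_n}`.  Then `M` is an
essential extension of `V`: every nonzero `C(q)`-submodule of `M` intersects `V`
nontrivially. -/
theorem quantizedWeyl_M_essential_extension (K : Type) [Field K] (q : K) (hq0 : q ≠ 0)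
    (hq : ∀ k : ℕ, 0 < k → q ^ k ≠ 1)
    (M : Type) [AddCommGroup M] [Module K M] [Module (QuantizedWeyl K q) M]
    [IsScalarTower K (QuantizedWeyl K q) M]
    (bas : Module.Basis (ℕ ⊕ ℕ) K M)
    (ha0 : QuantizedWeyl.a K q • bas (Sum.inl 0) = (0 : M))
    (hav : ∀ n : ℕ, QuantizedWeyl.a K q • bas (Sum.inl (n + 1)) =
      ((q ^ (n + 1) - 1) / (q - 1)) • bas (Sum.inl n))
    (hbv : ∀ n : ℕ, QuantizedWeyl.b K q • bas (Sum.inl n) = bas (Sum.inl (n + 1)))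
    (haw : ∀ n : ℕ, QuantizedWeyl.a K q • bas (Sum.inr n) =
      q ^ n • (bas (Sum.inr n) + bas (Sum.inr (n + 1))))
    (hbw : ∀ n : ℕ, QuantizedWeyl.b K q • bas (Sum.inr n) =
      ((q ^ n)⁻¹ / (1 - q)) • bas (Sum.inr n) + ((-1 : K) ^ n) • bas (Sum.inl 0))
    :
    ∀ N : Submodule (QuantizedWeyl K q) M, N ≠ ⊥ →
      ∃ x ∈ N, x ≠ 0 ∧
        x ∈ (Submodule.span K (Set.range fun n : ℕ => bas (Sum.inl n)) :
          Submodule K M) := by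
  classical
  intro N hN
  have hq1 : q ≠ 1 := by
    intro h; exact hq 1 one_pos (by simp [h])
  have h1q : (1 : K) - q ≠ 0 := sub_ne_zero.mpr (Ne.symm hq1)
  set bb := QuantizedWeyl.b K q with hbb
  set L : ℕ → K := fun m => (q ^ m)⁻¹ / (1 - q) with hL
  have hLne : ∀ m, L m ≠ 0 := fun m =>
    div_ne_zero (inv_ne_zero (pow_ne_zero m hq0)) h1q
  have hpow : ∀ m n : ℕ, q ^ m = q ^ n → m = n := by
    intro m n h
    by_contra hne
    rcases Nat.lt_or_ge m n with hlt | hge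
    · have h2 : q ^ m * q ^ (n - m) = q ^ m * 1 := by
        rw [← pow_add, mul_one, show m + (n - m) = n by omega]; exact h.symm
      exact hq (n - m) (by omega) (mul_left_cancel₀ (pow_ne_zero m hq0) h2)
    · have h2 : q ^ n * q ^ (m - n) = q ^ n * 1 := by
        rw [← pow_add, mul_one, show n + (m - n) = m by omega]; exact h
      exact hq (m - n) (by omega) (mul_left_cancel₀ (pow_ne_zero n hq0) h2)
  have hLinj : ∀ m n, L m = L n → m = n := by
    intro m n h
    have h2 := congrArg (fun t => t * (1 - q)) h
    simp only [hL, div_mul_cancel₀ _ h1q] at h2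
    exact hpow m n (inv_injective h2)
  have hsc : ∀ (c : K) (z : M), bb • c • z = c • (bb • z) := by
    intro c z
    rw [← algebraMap_smul (QuantizedWeyl K q) c z, ← mul_smul,
      ← Algebra.commutes c bb, mul_smul, algebraMap_smul]
  have hNsmul : ∀ (c : K) {z : M}, z ∈ N → c • z ∈ N := by
    intro c z hz
    rw [← algebraMap_smul (QuantizedWeyl K q) c z]
    exact N.smul_mem _ hz
  set B : M →ₗ[K] M :=
    { toFun := fun z => bb • z
      map_add' := fun x y => smul_add bb x y
      map_smul' := fun c z => hsc c z } with hBdef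
  have hBapp : ∀ z : M, B z = bb • z := fun _ => rfl
  -- coordinate identity for v-coordinates
  have hB1 : ∀ (j : ℕ) (z : M),
      bas.repr (B z) (Sum.inl (j + 1)) = bas.repr z (Sum.inl j) := by
    intro j
    have h : (bas.coord (Sum.inl (j + 1))).comp B = bas.coord (Sum.inl j) := by
      apply bas.ext; intro i
      rcases i with n | m
      · simp [hBapp, Module.Basis.coord_apply, hbv n, Module.Basis.repr_self, Finsupp.single_apply]
      · simp [hBapp, Module.Basis.coord_apply, hbw m, Module.Basis.repr_self, Finsupp.single_apply]
    intro z
    have := LinearMap.congr_fun h z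
    simpa [Module.Basis.coord_apply] using this
  -- coordinate identity for w-coordinates
  have hB2 : ∀ (k : ℕ) (z : M),
      bas.repr (B z) (Sum.inr k) = L k * bas.repr z (Sum.inr k) := by
    intro k
    have h : (bas.coord (Sum.inr k)).comp B = L k • bas.coord (Sum.inr k) := by
      apply bas.ext; intro i
      rcases i with n | m
      · simp [hBapp, Module.Basis.coord_apply, hbv n, Module.Basis.repr_self, Finsupp.single_apply]
      · by_cases hmk : m = k
        · subst hmk
          simp [hBapp, Module.Basis.coord_apply, hbw m, Module.Basis.repr_self, Finsupp.single_apply, hL]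
        · simp [hBapp, Module.Basis.coord_apply, hbw m, Module.Basis.repr_self, Finsupp.single_apply, hmk]
    intro z
    have := LinearMap.congr_fun h z
    simpa [Module.Basis.coord_apply, smul_eq_mul] using this
  have key : ∀ (n : ℕ) (x : M), x ∈ N → x ≠ 0 →
      ((bas.repr x).support.preimage Sum.inr Sum.inr_injective.injOn).card ≤ n →
      ∃ y ∈ N, y ≠ 0 ∧ ∀ k : ℕ, bas.repr y (Sum.inr k) = 0 := by
    intro n
    induction n with
    | zero =>
      intro x hxN hx0 hcard
      refine ⟨x, hxN, hx0, fun k => ?_⟩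
      by_contra hk
      have hmem : k ∈ (bas.repr x).support.preimage Sum.inr Sum.inr_injective.injOn := by
        simp [Finsupp.mem_support_iff, hk]
      have := Finset.card_pos.mpr ⟨k, hmem⟩
      omega
    | succ n ih =>
      intro x hxN hx0 hcard
      set T := (bas.repr x).support.preimage Sum.inr Sum.inr_injective.injOn with hT
      by_cases hTe : T = ∅
      · refine ⟨x, hxN, hx0, fun k => ?_⟩
        by_contra hk
        have hmem : k ∈ T := by simp [hT, Finsupp.mem_support_iff, hk]
        simp [hTe] at hmem
      · obtain ⟨m, hm⟩ := Finset.nonempty_iff_ne_empty.mpr hTe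
        have hβm : bas.repr x (Sum.inr m) ≠ 0 := by
          simpa [hT, Finsupp.mem_support_iff] using hm
        set y := B x - L m • x with hy
        have hyN : y ∈ N := N.sub_mem (N.smul_mem bb hxN) (hNsmul (L m) hxN)
        have hβy : ∀ k, bas.repr y (Sum.inr k) = (L k - L m) * bas.repr x (Sum.inr k) := by
          intro k
          rw [hy, map_sub, map_smul, Finsupp.sub_apply, Finsupp.smul_apply, hB2 k x,
            smul_eq_mul, sub_mul]
        have hy0 : y ≠ 0 := by
          intro h0
          have hBx : B x = L m • x := by rwa [hy, sub_eq_zero] at h0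
          have hβ : ∀ k, k ≠ m → bas.repr x (Sum.inr k) = 0 := by
            intro k hk
            have hkk : (0 : K) = (L k - L m) * bas.repr x (Sum.inr k) := by
              rw [← hβy k, h0, map_zero, Finsupp.zero_apply]
            have hne : L k - L m ≠ 0 := sub_ne_zero.mpr (fun h => hk (hLinj k m h))
            exact (mul_eq_zero.mp hkk.symm).resolve_left hne
          have hstep : ∀ j, bas.repr x (Sum.inl j) = L m * bas.repr x (Sum.inl (j + 1)) := by
            intro j
            have h1 := hB1 j x
            rw [hBx, map_smul, Finsupp.smul_apply, smul_eq_mul] at h1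
            exact h1.symm
          have hiter : ∀ j k, bas.repr x (Sum.inl j) = L m ^ k * bas.repr x (Sum.inl (j + k)) := by
            intro j k
            induction k with
            | zero => simp
            | succ k ihk =>
              rw [ihk, hstep (j + k), pow_succ]
              rw [show j + (k + 1) = (j + k) + 1 from rfl]
              ring
          have hα : ∀ j, bas.repr x (Sum.inl j) = 0 := by
            intro j
            have hex : ∃ k, bas.repr x (Sum.inl (j + k)) = 0 := by
              by_contra hc
              push_neg at hc
              have hsub : Set.range (fun k : ℕ => (Sum.inl (j + k) : ℕ ⊕ ℕ)) ⊆
                  ↑(bas.repr x).support := by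
                rintro _ ⟨k, rfl⟩
                exact Finsupp.mem_support_iff.mpr (hc k)
              have hinf : (Set.range fun k : ℕ => (Sum.inl (j + k) : ℕ ⊕ ℕ)).Infinite :=
                Set.infinite_range_of_injective (fun a b hab => by
                  simp only [Sum.inl.injEq] at hab; omega)
              exact hinf (((bas.repr x).support.finite_toSet).subset hsub)
            obtain ⟨k, hk⟩ := hex
            rw [hiter j k, hk, mul_zero]
          have hx : x = bas.repr x (Sum.inr m) • bas (Sum.inr m) := by
            apply bas.repr.injective
            ext i
            rcases i with j | k
            · simp [hα j, Module.Basis.repr_self, Finsupp.single_apply]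
            · by_cases hkm : k = m
              · subst hkm; simp [Module.Basis.repr_self]
              · have hmk : m ≠ k := Ne.symm hkm
                simp [hβ k hkm, Module.Basis.repr_self, Finsupp.single_apply, hmk]
          have hyv : y = (bas.repr x (Sum.inr m) * (-1) ^ m) • bas (Sum.inl 0) := by
            rw [hy]
            conv_lhs => rw [hx]
            rw [map_smul, hBapp, hbw m]
            rw [hL]
            module
          rw [h0] at hyv
          have := hyv.symm
          rw [smul_eq_zero] at this
          rcases this with h | h
          · rcases mul_eq_zero.mp h with h' | h'
            · exact hβm h'
            · exact pow_ne_zero m (neg_ne_zero.mpr one_ne_zero) h'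
          · exact bas.ne_zero (Sum.inl 0) h
        have hTy : ((bas.repr y).support.preimage Sum.inr Sum.inr_injective.injOn) ⊆
            T.erase m := by
          intro k hk
          have hk' : bas.repr y (Sum.inr k) ≠ 0 := by
            simpa [Finsupp.mem_support_iff] using hk
          have hkm : k ≠ m := by
            intro h; apply hk'; rw [h, hβy m]; simp
          have hxk : bas.repr x (Sum.inr k) ≠ 0 := by
            intro h; apply hk'; rw [hβy k, h, mul_zero]
          exact Finset.mem_erase.mpr ⟨hkm, by simp [hT, Finsupp.mem_support_iff, hxk]⟩
        have hcy : ((bas.repr y).support.preimage Sum.inr Sum.inr_injective.injOn).card ≤ n := by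
          have h1 := Finset.card_le_card hTy
          have h2 : (T.erase m).card < T.card := Finset.card_erase_lt_of_mem hm
          omega
        exact ih y hyN hy0 hcy
  obtain ⟨x, hxN, hx0⟩ := (Submodule.ne_bot_iff N).mp hN
  obtain ⟨y, hyN, hy0, hyw⟩ := key _ x hxN hx0 le_rfl
  refine ⟨y, hyN, hy0, ?_⟩
  rw [← bas.linearCombination_repr y, Finsupp.linearCombination_apply, Finsupp.sum]
  apply Submodule.sum_mem
  intro i hi
  rcases i with j | k
  · exact Submodule.smul_mem _ _ (Submodule.subset_span ⟨j, rfl⟩)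
  · exact absurd (hyw k) (Finsupp.mem_support_iff.mp hi)

end
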